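/- For an admissible pair (a,p), the lower itinerary map x ↦ μ^-_{a,p}(x) is strictly increasing on [0,1] with respect to the lexicographic order on {0,1}^ℕ. -/
import Mathlib


open scoped Classical

/-- `(a,p)` is admissible if `a ∈ (1,2)`, `p ∈ (0,1)` and `1 - 1/a ≤ p ≤ 1/a`. -/
def Admissible (a p : ℝ) : Prop :=
  1 < a ∧ a < 2 ∧ 0 < p ∧ p < 1 ∧ 1 - 1 / a ≤ p ∧ p ≤ 1 / a

/-- The uniform lower Lorenz map `U⁻_{a,p}`. -/
noncomputable def Uminus (a p : ℝ) (x : ℝ) : ℝ :=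
  if x ≤ p then a * x else a * x + 1 - a

/-- The lower itinerary of `x` under `U⁻_{a,p}`. -/
noncomputable def muMinus (a p : ℝ) (x : ℝ) : ℕ → Bool :=
  fun k => decide (p < (Uminus a p)^[k] x)

/-- The (strict) lexicographic order on `{0,1}^ℕ`. -/
def LexLt (ω σ : ℕ → Bool) : Prop :=
  ∃ n : ℕ, (∀ m < n, ω m = σ m) ∧ ω n = false ∧ σ n = true

lemma Uminus_mem (a p : ℝ) (h : Admissible a p) {x : ℝ} (hx : x ∈ Set.Icc (0:ℝ) 1) :
    Uminus a p x ∈ Set.Icc (0:ℝ) 1 := by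
  obtain ⟨ha1, ha2, hp0, hp1, hpl, hpu⟩ := h
  have ha0 : (0:ℝ) < a := by linarith
  have hainv : a * (1 / a) = 1 := by field_simp
  have hap1 : a * p ≤ 1 := by
    have := mul_le_mul_of_nonneg_left hpu ha0.le
    linarith
  have hap2 : a - 1 ≤ a * p := by
    have := mul_le_mul_of_nonneg_left hpl ha0.le
    have : a * (1 - 1/a) ≤ a * p := this
    nlinarith
  obtain ⟨hx0, hx1⟩ := hx
  unfold Uminus
  split_ifs with hxp
  · constructor
    · positivity
    · nlinarith
  · push_neg at hxp
    constructor
    · nlinarith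
    · nlinarith

lemma iterate_mem (a p : ℝ) (h : Admissible a p) {x : ℝ} (hx : x ∈ Set.Icc (0:ℝ) 1) :
    ∀ n, (Uminus a p)^[n] x ∈ Set.Icc (0:ℝ) 1 := by
  intro n
  induction n with
  | zero => simpa using hx
  | succ n ih =>
    rw [Function.iterate_succ_apply']
    exact Uminus_mem a p h ih

lemma diff_eq (a p : ℝ) (h : Admissible a p) (x y : ℝ) :
    ∀ n, (∀ m < n, muMinus a p x m = muMinus a p y m) →
      (Uminus a p)^[n] y - (Uminus a p)^[n] x = a ^ n * (y - x) := by
  intro n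
  induction n with
  | zero => intro _; simp
  | succ n ih =>
    intro hm
    have ih' := ih (fun m hmn => hm m (Nat.lt_succ_of_lt hmn))
    have hn : muMinus a p x n = muMinus a p y n := hm n (Nat.lt_succ_self n)
    unfold muMinus at hn
    rw [decide_eq_decide] at hn
    rw [Function.iterate_succ_apply', Function.iterate_succ_apply']
    set u := (Uminus a p)^[n] x with hu
    set v := (Uminus a p)^[n] y with hv
    unfold Uminus
    by_cases hup : u ≤ p
    · have hvp : v ≤ p := by
        by_contra hc
        push_neg at hc
        exact absurd (hn.mpr hc) (not_lt.mpr hup)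
      rw [if_pos hup, if_pos hvp]
      calc a * v - a * u = a * (v - u) := by ring
        _ = a ^ (n+1) * (y - x) := by rw [ih']; ring
    · have hvp : ¬ v ≤ p := by
        intro hc
        exact hup (not_lt.mp (fun hlt => absurd (hn.mp hlt) (not_lt.mpr hc)))
      rw [if_neg hup, if_neg hvp]
      calc a * v + 1 - a - (a * u + 1 - a) = a * (v - u) := by ring
        _ = a ^ (n+1) * (y - x) := by rw [ih']; ring

theorem muMinus_strictMono (a p : ℝ) (h : Admissible a p) :
    ∀ x ∈ Set.Icc (0 : ℝ) 1, ∀ y ∈ Set.Icc (0 : ℝ) 1,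
      x < y → LexLt (muMinus a p x) (muMinus a p y) := by
  intro x hx y hy hxy
  have ha0 : (0:ℝ) < a := by linarith [h.1]
  by_cases hex : ∃ k, muMinus a p x k ≠ muMinus a p y k
  · set n := Nat.find hex with hn
    have hne := Nat.find_spec hex
    have hmlt : ∀ m < n, muMinus a p x m = muMinus a p y m := by
      intro m hm
      have := Nat.find_min hex hm
      exact not_ne_iff.mp this
    have hd := diff_eq a p h x y n hmlt
    have hpos : (Uminus a p)^[n] x < (Uminus a p)^[n] y := by
      have h1 : 0 < a ^ n * (y - x) := by
        have : 0 < y - x := by linarith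
        positivity
      linarith
    unfold muMinus at hne
    rw [ne_eq, decide_eq_decide] at hne
    refine ⟨n, hmlt, ?_, ?_⟩
    · unfold muMinus
      simp only [decide_eq_false_iff_not]
      intro hc
      exact hne ⟨fun _ => lt_trans hc hpos, fun _ => hc⟩
    · unfold muMinus
      simp only [decide_eq_true_eq]
      by_contra hy'
      have hx' : ¬ p < (Uminus a p)^[n] x := fun hlt => hy' (lt_trans hlt hpos)
      exact hne ⟨fun h' => absurd h' hx', fun h' => absurd h' hy'⟩
  · exfalso
    push_neg at hex
    obtain ⟨k, hk⟩ := pow_unbounded_of_one_lt ((1:ℝ)/(y - x)) h.1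
    have hd := diff_eq a p h x y k (fun m _ => hex m)
    have hbx := iterate_mem a p h hx k
    have hby := iterate_mem a p h hy k
    have hyx : 0 < y - x := by linarith
    have h1 : 1 < a ^ k * (y - x) := by
      rw [div_lt_iff₀ hyx] at hk
      nlinarith
    have : (Uminus a p)^[k] y - (Uminus a p)^[k] x ≤ 1 := by
      obtain ⟨h1', h2'⟩ := hbx; obtain ⟨h3', h4'⟩ := hby; linarith
    linarith
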